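/- Define F(z,u) = exp(u(e^{-z}+z-1)) and f_n(u) = n!·[z^n]F(z,u) (the n-th coefficient of the Taylor expansion in z, times n!). Then f_n(u) is a polynomial in u of degree ⌊n/2⌋, and the leading coefficient of f_{2n} equals (2n-1)!! = (2n-1)(2n-3)···3·1. -/

import Mathlib

open Finset Polynomial Nat

noncomputable def RR : ℕ → Polynomial (Polynomial ℝ)
  | 0 => 1
  | n+1 => (Polynomial.C Polynomial.X - Polynomial.X) * derivative (RR n) + Polynomial.X * RR n

lemma c0 (n : ℕ) : (RR (n+1)).coeff 0 = Polynomial.X * (RR n).coeff 1 := by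
  rw [show RR (n+1) = (Polynomial.C Polynomial.X - Polynomial.X) * derivative (RR n)
      + Polynomial.X * RR n from rfl]
  simp [coeff_add, sub_mul, coeff_sub, coeff_C_mul, mul_coeff_zero, coeff_derivative]

lemma cs (n j : ℕ) : (RR (n+1)).coeff (j+1) =
    Polynomial.X * ((RR n).coeff (j+2) * Polynomial.C ((j:ℝ)+2)) -
      (RR n).coeff (j+1) * Polynomial.C ((j:ℝ)+1) + (RR n).coeff j := by
  rw [show RR (n+1) = (Polynomial.C Polynomial.X - Polynomial.X) * derivative (RR n)
      + Polynomial.X * RR n from rfl]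
  have hC2 : ((j+1 : ℕ) : Polynomial ℝ) + 1 = Polynomial.C ((j:ℝ)+2) := by
    rw [show ((j:ℝ)+2) = (((j+1:ℕ)):ℝ) + 1 by push_cast; ring, Polynomial.C_add,
      Polynomial.C_1, Polynomial.C_eq_natCast]
  have hC1 : ((j:Polynomial ℝ) + 1) = Polynomial.C ((j:ℝ)+1) := by
    rw [Polynomial.C_add, Polynomial.C_1, Polynomial.C_eq_natCast]
  simp only [coeff_add, coeff_sub, sub_mul, coeff_C_mul, coeff_X_mul, coeff_derivative]
  rw [hC2, hC1]

noncomputable def Tv (j K : ℕ) : ℝ := (j + 2*K)! / (2^K * K ! * j !)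

lemma Tv_pos (j K : ℕ) : 0 < Tv j K := by
  unfold Tv
  apply _root_.div_pos
  · exact_mod_cast Nat.factorial_pos _
  · positivity

lemma Tv_zero (j : ℕ) : Tv j 0 = 1 := by
  unfold Tv
  simp only [Nat.mul_zero, Nat.add_zero, pow_zero, Nat.factorial_zero, Nat.cast_one, one_mul]
  rw [div_self]
  exact_mod_cast (Nat.factorial_pos j).ne'

lemma Tv01 (e : ℕ) : Tv 0 (e+1) = Tv 1 e := by
  unfold Tv
  have h1 : 0 + 2*(e+1) = (1 + 2*e) + 1 := by ring
  rw [h1, Nat.factorial_succ]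
  have h2 : (e+1)! = (e+1) * e ! := Nat.factorial_succ e
  rw [h2]
  push_cast
  field_simp
  ring

lemma TvRec (j e : ℕ) : Tv (j+1) (e+1) = Tv (j+2) e * ((j:ℝ)+2) + Tv j (e+1) := by
  unfold Tv
  have h1 : j + 1 + 2*(e+1) = (j + 2*e + 2) + 1 := by ring
  have h2 : j + 2 + 2*e = j + 2*e + 2 := by ring
  have h3 : j + 2*(e+1) = j + 2*e + 2 := by ring
  rw [h1, h2, h3, Nat.factorial_succ]
  have h5 : (e+1)! = (e+1) * e ! := Nat.factorial_succ e
  have h6 : (j+2)! = (j+2) * (j+1)! := Nat.factorial_succ (j+1)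
  have h7 : (j+1)! = (j+1) * j ! := Nat.factorial_succ j
  rw [h5, h6, h7]
  push_cast
  field_simp
  ring

lemma Tv_succ0 (m : ℕ) : Tv 0 (m+1) = (2*(m:ℝ)+1) * Tv 0 m := by
  unfold Tv
  have h1 : 0 + 2*(m+1) = (0 + 2*m + 1) + 1 := by ring
  rw [h1, Nat.factorial_succ]
  have h4 : (0 + 2*m + 1)! = (0 + 2*m + 1) * (0 + 2*m)! := Nat.factorial_succ _
  rw [h4]
  have h5 : (m+1)! = (m+1) * m ! := Nat.factorial_succ m
  rw [h5]
  push_cast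
  field_simp
  ring

lemma Tv_prod (m : ℕ) : Tv 0 m = ∏ i ∈ Finset.range m, (2 * (i:ℝ) + 1) := by
  induction m with
  | zero => simpa using Tv_zero 0
  | succ m ih => rw [Tv_succ0, prod_range_succ, ih]; ring

lemma inv (n : ℕ) :
    (∀ j d, n < j + 2*d → ((RR n).coeff j).coeff d = 0) ∧
    (∀ j K, n = j + 2*K → ((RR n).coeff j).coeff K = Tv j K) ∧
    (∀ j K, n = j + 2*K + 1 →
      ((RR n).coeff j).coeff K ≤ 0 ∧ (1 ≤ j ∨ 3 ≤ n → ((RR n).coeff j).coeff K < 0)) := by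
  induction n with
  | zero =>
    refine ⟨?_, ?_, ?_⟩
    · intro j d h
      rcases j with _ | j
      · rcases d with _ | e
        · omega
        · simp [RR, Polynomial.coeff_one]
      · simp [RR, Polynomial.coeff_one]
    · intro j K h
      have hj : j = 0 := by omega
      have hK : K = 0 := by omega
      subst hj; subst hK
      simp [RR, Tv_zero]
    · intro j K h; omega
  | succ n ih =>
    obtain ⟨Z, E, O⟩ := ih
    refine ⟨?_, ?_, ?_⟩
    · -- vanishing
      intro j d h
      rcases j with _ | j
      · rw [c0]
        rcases d with _ | e
        · simp
        · rw [Polynomial.coeff_X_mul]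
          exact Z 1 e (by omega)
      · rw [cs]
        simp only [Polynomial.coeff_add, Polynomial.coeff_sub]
        rcases d with _ | e
        · have h0 : (Polynomial.X * ((RR n).coeff (j+2) * Polynomial.C ((j:ℝ)+2))).coeff 0
              = 0 := by simp
          simp only [h0, Polynomial.coeff_mul_C, Z (j+1) 0 (by omega), Z j 0 (by omega)]
          ring
        · rw [Polynomial.coeff_X_mul]
          simp only [Polynomial.coeff_mul_C, Z (j+2) e (by omega), Z (j+1) (e+1) (by omega),
            Z j (e+1) (by omega)]
          ring
    · -- even values
      intro j K h
      rcases j with _ | j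
      · rcases K with _ | e
        · omega
        · rw [c0, Polynomial.coeff_X_mul, E 1 e (by omega), Tv01]
      · rw [cs]
        simp only [Polynomial.coeff_add, Polynomial.coeff_sub]
        rcases K with _ | e
        · have h0 : (Polynomial.X * ((RR n).coeff (j+2) * Polynomial.C ((j:ℝ)+2))).coeff 0
              = 0 := by simp
          simp only [h0, Polynomial.coeff_mul_C, Z (j+1) 0 (by omega), E j 0 (by omega),
            Tv_zero]
          ring
        · rw [Polynomial.coeff_X_mul]
          simp only [Polynomial.coeff_mul_C, E (j+2) e (by omega), Z (j+1) (e+1) (by omega),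
            E j (e+1) (by omega)]
          rw [TvRec]
          ring
    · -- odd values
      intro j K h
      rcases j with _ | j
      · rcases K with _ | e
        · have hn : n = 0 := by omega
          subst hn
          have h1 : (RR 0).coeff 1 = 0 := by simp [RR, Polynomial.coeff_one]
          rw [c0, h1, mul_zero]
          refine ⟨by simp, ?_⟩
          intro hc
          rcases hc with hc | hc <;> omega
        · rw [c0, Polynomial.coeff_X_mul]
          have hO := O 1 e (by omega)
          exact ⟨hO.1, fun _ => hO.2 (Or.inl le_rfl)⟩
      · have hkey : ((RR (n+1)).coeff (j+1)).coeff K < 0 := by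
          rw [cs]
          simp only [Polynomial.coeff_add, Polynomial.coeff_sub]
          have t2 : ((RR n).coeff (j+1)).coeff K = Tv (j+1) K := E (j+1) K (by omega)
          have t3 := (O j K (by omega)).1
          have hTpos : (0:ℝ) < Tv (j+1) K * ((j:ℝ)+1) :=
            mul_pos (Tv_pos _ _) (by positivity)
          rcases K with _ | e
          · have h0 : (Polynomial.X * ((RR n).coeff (j+2) * Polynomial.C ((j:ℝ)+2))).coeff 0
                = 0 := by simp
            simp only [h0, Polynomial.coeff_mul_C, t2]
            linarith
          · rw [Polynomial.coeff_X_mul]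
            simp only [Polynomial.coeff_mul_C, t2]
            have t1 := (O (j+2) e (by omega)).1
            have h1 : ((RR n).coeff (j+2)).coeff e * ((j:ℝ)+2) ≤ 0 :=
              mul_nonpos_iff.2 (Or.inr ⟨t1, by positivity⟩)
            linarith
        exact ⟨hkey.le, fun _ => hkey⟩

lemma hasDerivAt_H (u z : ℝ) :
    HasDerivAt (fun z : ℝ => Real.exp (u * (Real.exp (-z) + z - 1)))
      ((u * (1 - Real.exp (-z))) * Real.exp (u * (Real.exp (-z) + z - 1))) z := by
  have h0 : HasDerivAt (fun z : ℝ => Real.exp (-z)) (-Real.exp (-z)) z := by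
    simpa [Function.comp_def] using (Real.hasDerivAt_exp (-z)).comp z ((hasDerivAt_id z).neg)
  have h1 : HasDerivAt (fun z : ℝ => u * (Real.exp (-z) + z - 1)) (u * (1 - Real.exp (-z))) z := by
    have := (((h0.add (hasDerivAt_id z)).sub_const 1).const_mul u)
    have h2 : u * (1 - Real.exp (-z)) = u * (-Real.exp (-z) + 1) := by ring
    rw [h2]
    simpa [mul_add, mul_sub] using this
  simpa [mul_comm] using h1.exp

lemma hasDerivAt_phi (u z : ℝ) :
    HasDerivAt (fun z : ℝ => u * (1 - Real.exp (-z))) (u * Real.exp (-z)) z := by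
  have h0 : HasDerivAt (fun z : ℝ => Real.exp (-z)) (-Real.exp (-z)) z := by
    simpa [Function.comp_def] using (Real.hasDerivAt_exp (-z)).comp z ((hasDerivAt_id z).neg)
  have := ((hasDerivAt_const z (1:ℝ)).sub h0).const_mul u
  simpa using this

lemma key (u : ℝ) (n : ℕ) (z : ℝ) :
    iteratedDeriv n (fun z : ℝ => Real.exp (u * (Real.exp (-z) + z - 1))) z =
      ((RR n).map (evalRingHom u)).eval (u * (1 - Real.exp (-z))) *
        Real.exp (u * (Real.exp (-z) + z - 1)) := by
  induction n generalizing z with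
  | zero => simp [RR]
  | succ n ih =>
    rw [iteratedDeriv_succ]
    have hfun : iteratedDeriv n (fun z : ℝ => Real.exp (u * (Real.exp (-z) + z - 1))) =
        fun z => ((RR n).map (evalRingHom u)).eval (u * (1 - Real.exp (-z))) *
          Real.exp (u * (Real.exp (-z) + z - 1)) := funext ih
    rw [hfun]
    have hcomp : HasDerivAt
        (fun z : ℝ => ((RR n).map (evalRingHom u)).eval (u * (1 - Real.exp (-z))))
        ((derivative ((RR n).map (evalRingHom u))).eval (u * (1 - Real.exp (-z))) *
          (u * Real.exp (-z))) z :=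
      (Polynomial.hasDerivAt _ _).comp z (hasDerivAt_phi u z)
    have htot : HasDerivAt (fun z : ℝ => ((RR n).map (evalRingHom u)).eval (u * (1 - Real.exp (-z))) *
        Real.exp (u * (Real.exp (-z) + z - 1))) _ z := hcomp.mul (hasDerivAt_H u z)
    rw [htot.deriv]
    show _ = ((RR (n+1)).map (evalRingHom u)).eval (u * (1 - Real.exp (-z))) *
        Real.exp (u * (Real.exp (-z) + z - 1))
    rw [show RR (n+1) = (Polynomial.C Polynomial.X - Polynomial.X) * derivative (RR n)
      + Polynomial.X * RR n from rfl]
    simp only [Polynomial.map_add, Polynomial.map_mul, Polynomial.map_sub, Polynomial.map_C,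
      Polynomial.map_X, derivative_map, eval_add, eval_mul, eval_sub, eval_C, eval_X,
      coe_evalRingHom, Polynomial.eval_X]
    ring

/-- `f_n(u) = n!·[z^n] e^{u(e^{-z}+z-1)}` is a polynomial in `u` of degree
`⌊n/2⌋`, and the leading coefficient of `f_{2n}` is `(2n-1)!!`. -/
theorem coeff_polynomial_of_F (n : ℕ) :
    ∃ p : Polynomial ℝ,
      (∀ u : ℝ, Polynomial.eval u p =
        iteratedDeriv n (fun z : ℝ => Real.exp (u * (Real.exp (-z) + z - 1))) 0) ∧
      p.natDegree = n / 2 ∧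
      ∀ m : ℕ, n = 2 * m →
        p.leadingCoeff = ∏ i ∈ Finset.range m, (2 * (i : ℝ) + 1) := by
  obtain ⟨Z, E, O⟩ := inv n
  refine ⟨(RR n).coeff 0, ?_, ?_⟩
  · intro u
    rw [key u n 0]
    have e1 : (u * (1 - Real.exp (-(0:ℝ)))) = 0 := by simp
    have e2 : (u * (Real.exp (-(0:ℝ)) + 0 - 1)) = 0 := by simp
    rw [e1, e2, Real.exp_zero, mul_one, ← Polynomial.coeff_zero_eq_eval_zero,
      Polynomial.coeff_map, coe_evalRingHom]
  · have hdeg_le : ((RR n).coeff 0).natDegree ≤ n/2 :=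
      Polynomial.natDegree_le_iff_coeff_eq_zero.mpr fun k hk => Z 0 k (by omega)
    rcases Nat.even_or_odd n with ⟨m, hm⟩ | ⟨m, hm⟩
    · -- n even, n = m + m
      have hm2 : n/2 = m := by omega
      have hE : ((RR n).coeff 0).coeff m = Tv 0 m := E 0 m (by omega)
      have hne : ((RR n).coeff 0).coeff m ≠ 0 := by
        rw [hE]; exact (Tv_pos 0 m).ne'
      have hdeg : ((RR n).coeff 0).natDegree = m :=
        le_antisymm (hm2 ▸ hdeg_le) (Polynomial.le_natDegree_of_ne_zero hne)
      refine ⟨by rw [hdeg, hm2], ?_⟩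
      intro m' hm'
      have : m' = m := by omega
      subst this
      rw [Polynomial.leadingCoeff, hdeg, hE, Tv_prod]
    · -- n odd, n = 2m+1
      rcases Nat.eq_or_lt_of_le (show 1 ≤ n by omega) with h1 | h3
      · -- n = 1
        have hn : n = 1 := h1.symm
        subst hn
        have hz : (RR 1).coeff 0 = 0 := by
          rw [c0]
          have : (RR 0).coeff 1 = 0 := by simp [RR, Polynomial.coeff_one]
          rw [this, mul_zero]
        refine ⟨by rw [hz]; simp, ?_⟩
        intro m' hm'; omega
      · -- n ≥ 3 (odd)
        have hm2 : n/2 = m := by omega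
        have hO : ((RR n).coeff 0).coeff m < 0 :=
          (O 0 m (by omega)).2 (Or.inr (by omega))
        have hne : ((RR n).coeff 0).coeff m ≠ 0 := hO.ne
        have hdeg : ((RR n).coeff 0).natDegree = m :=
          le_antisymm (hm2 ▸ hdeg_le) (Polynomial.le_natDegree_of_ne_zero hne)
        refine ⟨by rw [hdeg, hm2], ?_⟩
        intro m' hm'; omega
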